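/- For a formal power series in two variables with integer coefficients, the truncation operation commutes with multiplication by (1 - u^i v^j) in the following sense: [(1 - u^i v^j) · [A(u,v)]_+]_+ = [(1 - u^i v^j) · A(u,v)]_+, where for A(u,v) = Σ a_{kl} u^k v^l, the truncation [A]_+ = Σ b_{kl} u^k v^l is defined by b_{kl} = a_{kl} if a_{mn} > 0 for all (m,n) ≤ (k,l) (componentwise order), and b_{kl} = 0 otherwise. -/
import Mathlib


open scoped Classical in
/-- The bivariate truncation `[·]_+`: the coefficient at `(k,l)` is kept iff all
coefficients at componentwise-smaller positions are strictly positive. -/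
noncomputable def trunc (A : ℕ × ℕ → ℤ) : ℕ × ℕ → ℤ :=
  fun p => if ∀ q ≤ p, 0 < A q then A p else 0

/-- Multiplication of a bivariate power series (given by its coefficient function)
by `(1 - u^i v^j)`, on the level of coefficient functions. -/
noncomputable def mulOneSub (i j : ℕ) (A : ℕ × ℕ → ℤ) : ℕ × ℕ → ℤ :=
  fun p => A p - (if i ≤ p.1 ∧ j ≤ p.2 then A (p.1 - i, p.2 - j) else 0)

lemma trunc_nonneg (A : ℕ × ℕ → ℤ) (p : ℕ × ℕ) : 0 ≤ trunc A p := by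
  unfold trunc
  split_ifs with h
  · exact le_of_lt (h p le_rfl)
  · exact le_refl 0

lemma pos_of_QT (i j : ℕ) (A : ℕ × ℕ → ℤ) (p : ℕ × ℕ)
    (h : ∀ q ≤ p, 0 < mulOneSub i j (trunc A) q) : ∀ q ≤ p, 0 < A q := by
  intro q hq
  have h1 := h q hq
  unfold mulOneSub at h1
  have h0 : (0:ℤ) ≤ (if i ≤ q.1 ∧ j ≤ q.2 then trunc A (q.1 - i, q.2 - j) else 0) := by
    split_ifs
    · exact trunc_nonneg A _
    · exact le_refl 0
  have h2 : 0 < trunc A q := by linarith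
  unfold trunc at h2
  split_ifs at h2 with hp
  · exact h2
  · exact absurd h2 (lt_irrefl 0)

open scoped Classical in
lemma trunc_apply (A : ℕ × ℕ → ℤ) (p : ℕ × ℕ) :
    trunc A p = if ∀ q ≤ p, 0 < A q then A p else 0 := rfl

lemma pos_of_QA (i j : ℕ) (hij : (i, j) ≠ (0, 0)) (A : ℕ × ℕ → ℤ) (p : ℕ × ℕ)
    (h : ∀ q ≤ p, 0 < mulOneSub i j A q) : ∀ q ≤ p, 0 < A q := by
  have hij' : 0 < i + j := by
    rcases Nat.eq_zero_or_pos (i + j) with h0 | h0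
    · exact absurd (Prod.ext_iff.mpr ⟨by omega, by omega⟩) hij
    · exact h0
  have main : ∀ n : ℕ, ∀ q : ℕ × ℕ, q.1 + q.2 = n → q ≤ p → 0 < A q := by
    intro n
    induction n using Nat.strong_induction_on with
    | _ n ih =>
      intro q hn hq
      have h1 := h q hq
      unfold mulOneSub at h1
      by_cases hc : i ≤ q.1 ∧ j ≤ q.2
      · rw [if_pos hc] at h1
        have hle : (q.1 - i, q.2 - j) ≤ q :=
          Prod.le_def.mpr ⟨Nat.sub_le _ _, Nat.sub_le _ _⟩
        have hsub : (q.1 - i) + (q.2 - j) < n := by omega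
        have := ih _ hsub (q.1 - i, q.2 - j) rfl (le_trans hle hq)
        linarith
      · rw [if_neg hc] at h1
        linarith
  exact fun q hq => main _ q rfl hq

/-- `[(1 - u^i v^j)·[A]_+]_+ = [(1 - u^i v^j)·A]_+` for `(i,j) ≠ (0,0)`. -/
theorem trunc_mulOneSub_trunc (i j : ℕ) (hij : (i, j) ≠ (0, 0)) (A : ℕ × ℕ → ℤ) :
    trunc (mulOneSub i j (trunc A)) = trunc (mulOneSub i j A) := by
  funext p
  have key : ∀ p : ℕ × ℕ, (∀ q ≤ p, 0 < A q) →
      ∀ q ≤ p, mulOneSub i j (trunc A) q = mulOneSub i j A q := by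
    intro p hp q hq
    have hT : ∀ r ≤ p, trunc A r = A r := by
      intro r hr
      unfold trunc
      exact if_pos (fun s hs => hp s (le_trans hs hr))
    unfold mulOneSub
    rw [hT q hq]
    congr 1
    split_ifs with hc
    · exact hT _ (le_trans (Prod.le_def.mpr ⟨Nat.sub_le _ _, Nat.sub_le _ _⟩) hq)
    · rfl
  by_cases hA : ∀ q ≤ p, 0 < mulOneSub i j A q
  · have hP := pos_of_QA i j hij A p hA
    have heq := key p hP
    have hT : ∀ q ≤ p, 0 < mulOneSub i j (trunc A) q := by
      intro q hq; rw [heq q hq]; exact hA q hq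
    rw [trunc_apply, trunc_apply, if_pos hA, if_pos hT]
    exact heq p le_rfl
  · have hT : ¬ ∀ q ≤ p, 0 < mulOneSub i j (trunc A) q := by
      intro hT
      have hP := pos_of_QT i j A p hT
      have heq := key p hP
      exact hA fun q hq => by rw [← heq q hq]; exact hT q hq
    rw [trunc_apply, trunc_apply, if_neg hA, if_neg hT]
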